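/- Let X be a real normed space, C ⊆ X a nontrivial cone, f ∈ X*, and α > 0 such that (f,α) ∈ C^{a*}. Then S(f,α) is a closed convex cone with a bounded base, and −C ⊆ S(f,α). -/

import Mathlib

open Set Metric Pointwise

namespace HenigPaper

variable {X : Type*} [NormedAddCommGroup X] [NormedSpace ℝ X]

/-- `C` is a cone: closed under multiplication by nonnegative scalars. -/
def IsCone (C : Set X) : Prop :=
  ∀ ⦃l : ℝ⦄, 0 ≤ l → ∀ ⦃x⦄, x ∈ C → l • x ∈ C

/-- `C` is a nontrivial cone: `{0} ⊊ C ⊊ X`. -/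
def NontrivialCone (C : Set X) : Prop :=
  IsCone C ∧ ({(0 : X)} : Set X) ⊂ C ∧ C ≠ Set.univ

/-- A cone is pointed if `(-C) ∩ C = {0}`. -/
def PointedCone' (C : Set X) : Prop := (-C) ∩ C = ({(0 : X)} : Set X)

/-- Convexity of a cone in the sense `C + C = C`. -/
def ConeConvex (C : Set X) : Prop := C + C = C

/-- The strict separation property (SSP) for the pair of cones `(C, K)`. -/
def SSP (C K : Set X) : Prop :=
  (0 : X) ∉ closure (convexHull ℝ (C ∩ sphere (0 : X) 1) -
    convexHull ℝ ((frontier K ∩ sphere (0 : X) 1) ∪ {(0 : X)}))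

/-- The Bishop–Phelps cone `C(f, α) = {x : f x ≥ α ‖x‖}`. -/
def BPCone (f : X →L[ℝ] ℝ) (α : ℝ) : Set X := {x : X | α * ‖x‖ ≤ f x}

/-- The sublevel set `S(f, α) = {x : f x + α ‖x‖ ≤ 0}`. -/
def Ssub (f : X →L[ℝ] ℝ) (α : ℝ) : Set X := {x : X | f x + α * ‖x‖ ≤ 0}

/-- `f ∈ C^#`: strictly positive functionals on `C`. -/
def StrictlyPos (C : Set X) (f : X →L[ℝ] ℝ) : Prop :=
  ∀ x ∈ C, x ≠ 0 → 0 < f x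

/-- `(f, α) ∈ C^{a*}`: the augmented dual cone. -/
def MemAugDual (C : Set X) (f : X →L[ℝ] ℝ) (α : ℝ) : Prop :=
  StrictlyPos C f ∧ 0 ≤ α ∧ ∀ x ∈ C, α * ‖x‖ ≤ f x

/-- `(f, α) ∈ C^{a#}_+`. -/
def MemAugDualSharpPlus (C : Set X) (f : X →L[ℝ] ℝ) (α : ℝ) : Prop :=
  StrictlyPos C f ∧ 0 < α ∧ ∀ x ∈ C, x ≠ 0 → α * ‖x‖ < f x

/-- `B` is a base for the cone `C`. -/
def IsBase (C B : Set X) : Prop :=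
  B.Nonempty ∧ Convex ℝ B ∧ B ⊆ C ∧ (0 : X) ∉ closure B ∧
    ∀ x ∈ C, x ≠ (0 : X) → ∃! p : ℝ × X, 0 < p.1 ∧ p.2 ∈ B ∧ x = p.1 • p.2

/-- The cone `C` has a bounded base. -/
def HasBoundedBase (C : Set X) : Prop :=
  ∃ B : Set X, IsBase C B ∧ Bornology.IsBounded B

/-- The cone generated by a set `A`. -/
def coneGen (A : Set X) : Set X := {y : X | ∃ l : ℝ, 0 ≤ l ∧ ∃ a ∈ A, y = l • a}

/-- The `ε`-conic neighbourhood `C_ε` of a cone `C`. -/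
def epsCone (C : Set X) (ε : ℝ) : Set X :=
  coneGen {x : X | infDist x (C ∩ sphere (0 : X) 1) ≤ ε}

/-- `δ_B = inf {‖b‖ : b ∈ B}`. -/
noncomputable def deltaB (B : Set X) : ℝ := sInf ((fun b => ‖b‖) '' B)

/-- The Henig dilating cone `C_{(B,ε)}`. -/
def henigCone (B : Set X) (ε : ℝ) : Set X :=
  coneGen {x : X | infDist x B ≤ ε}

/-- The set of efficient (Pareto minimal) points of `A` with respect to the cone `C`. -/
def MinSet (A C : Set X) : Set X :=
  {x ∈ A | (A - ({x} : Set X)) ∩ (-C) = ({(0 : X)} : Set X)}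

/-- The set of Henig global proper efficient points of `A` with respect to `C`. -/
def GHe (A C : Set X) : Set X :=
  {x : X | ∃ K : Set X, IsCone K ∧ ConeConvex K ∧ C \ {(0 : X)} ⊆ interior K ∧
    x ∈ MinSet A K}

/-- A subset of `X` is weakly compact if it is compact in the weak topology. -/
def WeaklyCompact (A : Set X) : Prop :=
  IsCompact ((toWeakSpace ℝ X) '' A)

end HenigPaper

open HenigPaper

variable {X : Type*} [NormedAddCommGroup X] [NormedSpace ℝ X]


/-- If `C` is a nontrivial cone, `α > 0` and `(f,α) ∈ C^{a*}`, then `S(f,α)` is a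
closed convex cone with a bounded base, and `-C ⊆ S(f,α)`. -/
theorem stmt3 (C : Set X) (hC : NontrivialCone C) (f : X →L[ℝ] ℝ) (α : ℝ)
    (hα : 0 < α) (hmem : MemAugDual C f α) :
    IsClosed (Ssub f α) ∧ IsCone (Ssub f α) ∧ ConeConvex (Ssub f α) ∧
      HasBoundedBase (Ssub f α) ∧ -C ⊆ Ssub f α := by
  obtain ⟨hpos, hαnn, hdual⟩ := hmem
  have hmemS : ∀ x : X, x ∈ Ssub f α ↔ f x + α * ‖x‖ ≤ 0 := fun x => Iff.rfl
  -- closedness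
  have hclosed : IsClosed (Ssub f α) := by
    have : Ssub f α = (fun x => f x + α * ‖x‖) ⁻¹' Set.Iic 0 := rfl
    rw [this]
    exact IsClosed.preimage (f.continuous.add (continuous_const.mul continuous_norm))
      isClosed_Iic
  -- cone
  have hcone : IsCone (Ssub f α) := by
    intro l hl x hx
    have hx' : f x + α * ‖x‖ ≤ 0 := hx
    have heq : f (l • x) + α * ‖l • x‖ = l * (f x + α * ‖x‖) := by
      rw [map_smul, norm_smul, Real.norm_eq_abs, abs_of_nonneg hl, smul_eq_mul]
      ring
    show f (l • x) + α * ‖l • x‖ ≤ 0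
    rw [heq]
    exact mul_nonpos_of_nonneg_of_nonpos hl hx'
  -- zero mem
  have h0 : (0 : X) ∈ Ssub f α := by
    show f 0 + α * ‖(0 : X)‖ ≤ 0
    simp
  -- convexity of cone
  have hsum : ∀ a ∈ Ssub f α, ∀ b ∈ Ssub f α, a + b ∈ Ssub f α := by
    intro a ha b hb
    have ha' : f a + α * ‖a‖ ≤ 0 := ha
    have hb' : f b + α * ‖b‖ ≤ 0 := hb
    show f (a + b) + α * ‖a + b‖ ≤ 0
    have h1 : ‖a + b‖ ≤ ‖a‖ + ‖b‖ := norm_add_le a b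
    have h2 : f (a + b) = f a + f b := map_add f a b
    nlinarith
  have hconv : ConeConvex (Ssub f α) := by
    apply Set.Subset.antisymm
    · rintro x ⟨a, ha, b, hb, rfl⟩
      exact hsum a ha b hb
    · intro x hx
      exact ⟨x, hx, 0, h0, by simp⟩
  -- -C ⊆ S
  have hnegC : -C ⊆ Ssub f α := by
    rintro x hx
    rw [Set.mem_neg] at hx
    have := hdual (-x) hx
    show f x + α * ‖x‖ ≤ 0
    rw [map_neg, norm_neg] at this
    linarith
  -- negativity of f on S \ {0}
  have hfneg : ∀ x ∈ Ssub f α, x ≠ 0 → f x < 0 := by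
    intro x hx hx0
    have hx' : f x + α * ‖x‖ ≤ 0 := hx
    have : 0 < ‖x‖ := norm_pos_iff.mpr hx0
    nlinarith
  -- the base
  set B : Set X := {x ∈ Ssub f α | f x = -1} with hB
  -- nonempty
  obtain ⟨c, hcC, hc0⟩ := Set.exists_of_ssubset hC.2.1
  have hc0' : c ≠ 0 := by simpa using hc0
  have hfc : 0 < f c := hpos c hcC hc0'
  have hcS : -c ∈ Ssub f α := hnegC (by rw [Set.mem_neg]; simpa using hcC)
  have hbmem : (f c)⁻¹ • (-c) ∈ B := by
    refine ⟨hcone (le_of_lt (inv_pos.mpr hfc)) hcS, ?_⟩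
    rw [map_smul]
    simp only [map_neg, smul_eq_mul]
    field_simp
  have hBne : B.Nonempty := ⟨_, hbmem⟩
  -- convexity of S and B
  have hSconv : Convex ℝ (Ssub f α) := by
    intro a ha b hb t s ht hs hts
    exact hsum _ (hcone ht ha) _ (hcone hs hb)
  have hBconv : Convex ℝ B := by
    intro a ha b hb t s ht hs hts
    refine ⟨hSconv ha.1 hb.1 ht hs hts, ?_⟩
    simp only [map_add, map_smul, smul_eq_mul, ha.2, hb.2]
    linarith [hts]
  -- 0 ∉ closure B
  have hBcl : (0 : X) ∉ closure B := by
    intro h0cl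
    have hsubB : B ⊆ f ⁻¹' {(-1 : ℝ)} := fun x hx => hx.2
    have : closure B ⊆ f ⁻¹' {(-1 : ℝ)} :=
      closure_minimal hsubB (IsClosed.preimage f.continuous isClosed_singleton)
    have := this h0cl
    simp at this
  -- base property
  have hbase : ∀ x ∈ Ssub f α, x ≠ (0 : X) →
      ∃! p : ℝ × X, 0 < p.1 ∧ p.2 ∈ B ∧ x = p.1 • p.2 := by
    intro x hx hx0
    have hfx : f x < 0 := hfneg x hx hx0
    refine ⟨(-f x, (-f x)⁻¹ • x), ⟨by linarith, ⟨?_, ?_⟩, ?_⟩, ?_⟩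
    · exact hcone (le_of_lt (inv_pos.mpr (by linarith))) hx
    · rw [map_smul, smul_eq_mul]
      field_simp
      rw [div_self hfx.ne]
    · rw [smul_smul]
      rw [mul_inv_cancel₀ (by linarith), one_smul]
    · rintro ⟨l, b⟩ ⟨hl, ⟨hbS, hfb⟩, hxe⟩
      dsimp only at hl hbS hfb hxe ⊢
      have hfl : f x = -l := by rw [hxe, map_smul, smul_eq_mul, hfb]; ring
      have hl' : l = -f x := by linarith [hfl]
      have hb : b = (-f x)⁻¹ • x := by
        have h1 : (-f x)⁻¹ • x = (-f x)⁻¹ • (l • b) := by rw [← hxe]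
        rw [h1, smul_smul, hl', inv_mul_cancel₀ (by linarith), one_smul]
      simp [Prod.ext_iff, hl', hb]
  -- boundedness
  have hBbd : Bornology.IsBounded B := by
    apply Bornology.IsBounded.subset (Metric.isBounded_closedBall (x := (0:X)) (r := α⁻¹))
    intro x hx
    have hxS : f x + α * ‖x‖ ≤ 0 := hx.1
    have hfx : f x = -1 := hx.2
    rw [Metric.mem_closedBall, dist_zero_right]
    rw [hfx] at hxS
    rw [← one_div, le_div_iff₀ hα]
    linarith
  exact ⟨hclosed, hcone, hconv, ⟨B, ⟨hBne, hBconv, fun x hx => hx.1, hBcl, hbase⟩, hBbd⟩, hnegC⟩
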